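/- Let θ = (θ_1,…,θ_k) be a probability vector with all θ_i > 0 and let τ(θ,α)_i = θ_i^α / Σ_j θ_j^α be the tilted distribution of order α. Then the derivative of the Shannon entropy of the tilted distribution with respect to α at α = 1 equals minus the varentropy: d/dα [H(τ(θ,α))]|_{α=1} = -V(θ), where H(μ) = Σ_i μ_i·log(1/μ_i) and V(θ) = Σ_i θ_i·(log(1/θ_i) - H(θ))². -/

import Mathlib

theorem stmt_17 {k : ℕ} (θ : Fin k → ℝ)
    (hpos : ∀ i, 0 < θ i) (hsum : ∑ i, θ i = 1)
    (H V : ℝ)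
    (hH : H = ∑ i, θ i * Real.log (1 / θ i))
    (hV : V = ∑ i, θ i * (Real.log (1 / θ i) - H) ^ 2) :
    HasDerivAt
      (fun α : ℝ =>
        ∑ i, (θ i ^ α / ∑ j, θ j ^ α) * Real.log (1 / (θ i ^ α / ∑ j, θ j ^ α)))
      (-V) 1 := by
  have hk : (Finset.univ : Finset (Fin k)).Nonempty := by
    rcases Nat.eq_zero_or_pos k with h | h
    · subst h; simp at hsum
    · exact ⟨⟨0, h⟩, Finset.mem_univ _⟩
  have hZpos : ∀ α : ℝ, 0 < ∑ j, θ j ^ α := fun α =>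
    Finset.sum_pos (fun j _ => Real.rpow_pos_of_pos (hpos j) α) hk
  -- derivative of Z
  have hZ : ∀ α : ℝ, HasDerivAt (fun a : ℝ => ∑ j, θ j ^ a)
      (∑ j, θ j ^ α * Real.log (θ j)) α := by
    intro α
    exact HasDerivAt.fun_sum fun j _ => (Real.hasStrictDerivAt_const_rpow (hpos j) α).hasDerivAt
  -- derivative of A
  have hA : ∀ α : ℝ, HasDerivAt (fun a : ℝ => ∑ j, θ j ^ a * (a * Real.log (θ j)))
      (∑ j, (θ j ^ α * Real.log (θ j) * (α * Real.log (θ j)) + θ j ^ α * Real.log (θ j))) α := by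
    intro α
    refine HasDerivAt.fun_sum fun j _ => ?_
    have h1 := (Real.hasStrictDerivAt_const_rpow (hpos j) α).hasDerivAt
    have h2 : HasDerivAt (fun a : ℝ => a * Real.log (θ j)) (Real.log (θ j)) α := by
      simpa using (hasDerivAt_id α).mul_const (Real.log (θ j))
    simpa [mul_comm, mul_assoc, mul_left_comm] using h1.fun_mul h2
  have hZne : (∑ j, θ j ^ (1:ℝ)) ≠ 0 := ne_of_gt (hZpos 1)
  have hlog := (hZ 1).log hZne
  have hdiv := (hA 1).fun_div (hZ 1) hZne
  have hg := hlog.fun_sub hdiv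
  -- function equality
  have hfun : (fun α : ℝ => ∑ i, (θ i ^ α / ∑ j, θ j ^ α)
        * Real.log (1 / (θ i ^ α / ∑ j, θ j ^ α)))
      = fun a : ℝ => Real.log (∑ j, θ j ^ a)
        - (∑ j, θ j ^ a * (a * Real.log (θ j))) / (∑ j, θ j ^ a) := by
    funext α
    have hZne' : (∑ j, θ j ^ α) ≠ 0 := ne_of_gt (hZpos α)
    have hterm : ∀ i, (θ i ^ α / ∑ j, θ j ^ α) * Real.log (1 / (θ i ^ α / ∑ j, θ j ^ α))
        = θ i ^ α * Real.log (∑ j, θ j ^ α) / (∑ j, θ j ^ α)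
          - θ i ^ α * (α * Real.log (θ i)) / (∑ j, θ j ^ α) := by
      intro i
      have hp : θ i ^ α ≠ 0 := ne_of_gt (Real.rpow_pos_of_pos (hpos i) α)
      rw [one_div, Real.log_inv, Real.log_div hp hZne', Real.log_rpow (hpos i)]
      ring
    rw [Finset.sum_congr rfl fun i _ => hterm i, Finset.sum_sub_distrib,
        ← Finset.sum_div, ← Finset.sum_div, ← Finset.sum_mul]
    congr 1
    rw [mul_comm, mul_div_assoc, div_self hZne', mul_one]
  rw [hfun]
  refine hg.congr_deriv ?_
  -- compute the derivative value
  have hV' : V = (∑ i, θ i * Real.log (θ i) ^ 2) - (∑ i, θ i * Real.log (θ i)) ^ 2 := by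
    have hH' : H = -∑ i, θ i * Real.log (θ i) := by
      rw [hH, ← Finset.sum_neg_distrib]
      exact Finset.sum_congr rfl fun i _ => by rw [one_div, Real.log_inv]; ring
    rw [hV, hH']
    have hterm : ∀ i, θ i * (Real.log (1 / θ i) - -∑ i, θ i * Real.log (θ i)) ^ 2
        = θ i * Real.log (θ i) ^ 2
          - 2 * (∑ i, θ i * Real.log (θ i)) * (θ i * Real.log (θ i))
          + (∑ i, θ i * Real.log (θ i)) ^ 2 * θ i := by
      intro i; rw [one_div, Real.log_inv]; ring
    rw [Finset.sum_congr rfl fun i _ => hterm i, Finset.sum_add_distrib,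
        Finset.sum_sub_distrib, ← Finset.mul_sum, ← Finset.mul_sum, hsum]
    ring
  simp only [Real.rpow_one, one_mul, hsum, one_pow, div_one, mul_one]
  rw [hV', Finset.sum_add_distrib]
  have hsq : ∑ j, θ j * Real.log (θ j) * Real.log (θ j) = ∑ j, θ j * Real.log (θ j) ^ 2 :=
    Finset.sum_congr rfl fun j _ => by ring
  rw [hsq]
  ring
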